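/- (Strong convergence theorem.) Let H₁, H₂ be real Hilbert spaces, C ⊆ H₁ and Q ⊆ H₂ nonempty closed convex sets, S : C → C and T : Q → Q nonexpansive mappings, A : H₁ → H₂ a bounded linear operator with adjoint A*, g : Q × Q → ℝ satisfying Assumptions A, and f : C × C → ℝ satisfying Assumptions B with constants c₁, c₂ > 0. Let x¹ ∈ C₁ = C, let 0 < a ≤ b < min{1/(2c₁), 1/(2c₂)} and {λ_k} ⊆ [a, b], let 0 < α < 1, let μ > 0 with μ‖A‖² < 1, and let {α_k} ⊆ (0, ∞) with liminf_{k→∞} α_k > 0. Suppose the sequences {x^k}, {y^k}, {z^k}, {t^k}, {u^k}, {s^k} and sets {C_k} satisfy, for every k ≥ 1: y^k ∈ C minimizes y ↦ λ_k f(x^k, y) + (1/2)‖y − x^k‖² over C; z^k ∈ C minimizes y ↦ λ_k f(y^k, y) + (1/2)‖y − x^k‖² over C; t^k = (1 − α)z^k + α S(z^k); u^k ∈ Q satisfies g(u^k, v) + (1/α_k)⟨v − u^k, u^k − A t^k⟩ ≥ 0 for all v ∈ Q; s^k = P_C(t^k + μ A*(T(u^k) − A t^k)); C_{k+1} = {r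 ∈ C_k : ‖s^k − r‖ ≤ ‖t^k − r‖ ≤ ‖x^k − r‖}; and x^{k+1} = P_{C_{k+1}}(x¹). If Ω = {x* ∈ C : f(x*, y) ≥ 0 for all y ∈ C, S(x*) = x*, A x* ∈ Q, g(A x*, v) ≥ 0 for all v ∈ Q, and T(A x*) = A x*} is nonempty, then each C_k is a nonempty closed convex set containing Ω, the iterates are well defined, and there exists p ∈ Ω such that {x^k} and {z^k} converge strongly to p and {u^k} converges strongly to A p, with A p ∈ Sol(Q, g) ∩ Fix(T). -/

import Mathlib

open Filter

section Helpers
variable {H : Type*} [NormedAddCommGroup H] [InnerProductSpace ℝ H]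

private lemma SEPNM.le_of_tau (A B K : ℝ) (hK : 0 ≤ K)
    (h : ∀ τ ∈ Set.Ioc (0:ℝ) 1, A ≤ B + τ * K) : A ≤ B := by
  rcases eq_or_lt_of_le hK with h0 | hKpos
  · have := h 1 ⟨one_pos, le_refl 1⟩; rw [← h0] at this; linarith
  · apply le_of_forall_pos_le_add
    intro ε hε
    have hτ1 : (0:ℝ) < min 1 (ε / K) := lt_min one_pos (div_pos hε hKpos)
    have := h (min 1 (ε / K)) ⟨hτ1, min_le_left _ _⟩
    have h2 : min 1 (ε / K) * K ≤ ε := by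
      calc min 1 (ε / K) * K ≤ (ε / K) * K := by
            apply mul_le_mul_of_nonneg_right (min_le_right _ _) hK
        _ = ε := div_mul_cancel₀ _ hKpos.ne'
    linarith

private lemma SEPNM.le_of_sq_le_sq {a b : ℝ} (ha : 0 ≤ a) (hb : 0 ≤ b)
    (h : a ^ 2 ≤ b ^ 2) : a ≤ b := by nlinarith

private lemma SEPNM.le_of_sq_le_mul {a b : ℝ} (ha : 0 ≤ a) (hb : 0 ≤ b)
    (h : a ^ 2 ≤ a * b) : a ≤ b := by nlinarith

private lemma SEPNM.norm_sub_le_iff (a b r : H) :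
    ‖a - r‖ ≤ ‖b - r‖ ↔ 2 * (inner ℝ (b - a) r : ℝ) ≤ ‖b‖ ^ 2 - ‖a‖ ^ 2 := by
  have e1 : ‖a - r‖ ^ 2 = ‖a‖ ^ 2 - 2 * (inner ℝ a r : ℝ) + ‖r‖ ^ 2 := norm_sub_sq_real a r
  have e2 : ‖b - r‖ ^ 2 = ‖b‖ ^ 2 - 2 * (inner ℝ b r : ℝ) + ‖r‖ ^ 2 := norm_sub_sq_real b r
  have e3 : (inner ℝ (b - a) r : ℝ) = inner ℝ b r - inner ℝ a r := inner_sub_left b a r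
  constructor
  · intro h
    have := pow_le_pow_left₀ (norm_nonneg (a - r)) h 2
    rw [e1, e2] at this; rw [e3]; linarith
  · intro h
    apply SEPNM.le_of_sq_le_sq (norm_nonneg _) (norm_nonneg _)
    rw [e1, e2]; rw [e3] at h; linarith

private lemma SEPNM.halfspace_closed (a b : H) :
    IsClosed {r : H | ‖a - r‖ ≤ ‖b - r‖} := by
  have : {r : H | ‖a - r‖ ≤ ‖b - r‖}
      = (fun r : H => 2 * (inner ℝ (b - a) r : ℝ)) ⁻¹' Set.Iic (‖b‖ ^ 2 - ‖a‖ ^ 2) := by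
    ext r; simp [SEPNM.norm_sub_le_iff, Set.mem_Iic]
  rw [this]
  exact IsClosed.preimage (continuous_const.mul (continuous_inner.comp (Continuous.prodMk continuous_const continuous_id))) isClosed_Iic

private lemma SEPNM.halfspace_convex (a b : H) :
    Convex ℝ {r : H | ‖a - r‖ ≤ ‖b - r‖} := by
  have : {r : H | ‖a - r‖ ≤ ‖b - r‖}
      = {r : H | 2 * (inner ℝ (b - a) r : ℝ) ≤ ‖b‖ ^ 2 - ‖a‖ ^ 2} := by
    ext r; simp [SEPNM.norm_sub_le_iff]
  rw [this]
  apply convex_halfSpace_le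
  constructor
  · intro u v; rw [inner_add_right]; ring
  · intro c u; simp [real_inner_smul_right, smul_eq_mul]; ring

private lemma SEPNM.argmin_vi {C : Set H} (hCcv : Convex ℝ C) {F : H → ℝ}
    (hF : ConvexOn ℝ C F) {lam : ℝ} (hlam : 0 < lam) (x₀ yk : H) (hyC : yk ∈ C)
    (hmin : ∀ w ∈ C, lam * F yk + (1/2) * ‖yk - x₀‖ ^ 2 ≤ lam * F w + (1/2) * ‖w - x₀‖ ^ 2)
    {w : H} (hw : w ∈ C) :
    (inner ℝ (x₀ - yk) (w - yk) : ℝ) ≤ lam * (F w - F yk) := by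
  have key : lam * F yk ≤ (lam * F w + (inner ℝ (yk - x₀) (w - yk) : ℝ)) + 1 * (‖w - yk‖ ^ 2 / 2) →
      True := fun _ => trivial
  have main : lam * F yk ≤ lam * F w + (inner ℝ (yk - x₀) (w - yk) : ℝ) := by
    apply SEPNM.le_of_tau _ _ (‖w - yk‖ ^ 2 / 2) (by positivity)
    intro τ hτ
    have hwτ : τ • w + (1 - τ) • yk ∈ C := hCcv hw hyC hτ.1.le (by linarith [hτ.2]) (by ring)
    have h1 := hmin _ hwτ
    have h2 : F (τ • w + (1 - τ) • yk) ≤ τ * F w + (1 - τ) * F yk :=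
      hF.2 hw hyC hτ.1.le (by linarith [hτ.2]) (by ring)
    have e1 : τ • w + (1 - τ) • yk - x₀ = (yk - x₀) + τ • (w - yk) := by
      rw [smul_sub, sub_smul, one_smul]; abel
    have e2 : ‖τ • w + (1 - τ) • yk - x₀‖ ^ 2
        = ‖yk - x₀‖ ^ 2 + 2 * (τ * (inner ℝ (yk - x₀) (w - yk) : ℝ)) + τ ^ 2 * ‖w - yk‖ ^ 2 := by
      rw [e1, norm_add_sq_real, real_inner_smul_right, norm_smul]
      rw [Real.norm_eq_abs, abs_of_pos hτ.1]
      ring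
    rw [e2] at h1
    have h3 : lam * F (τ • w + (1 - τ) • yk) ≤ lam * (τ * F w + (1 - τ) * F yk) :=
      mul_le_mul_of_nonneg_left h2 hlam.le
    have h4 : τ * (lam * F yk) ≤ τ * ((lam * F w + (inner ℝ (yk - x₀) (w - yk) : ℝ))
        + τ * (‖w - yk‖ ^ 2 / 2)) := by nlinarith
    exact le_of_mul_le_mul_left h4 hτ.1
  have e : (inner ℝ (x₀ - yk) (w - yk) : ℝ) = -(inner ℝ (yk - x₀) (w - yk) : ℝ) := by
    rw [← inner_neg_left]; congr 1; abel
  rw [e]; linarith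

end Helpers

set_option maxHeartbeats 1000000 in
/-- Strong convergence theorem for the hybrid extragradient algorithm for the split
equilibrium and nonexpansive mapping problem (SEPNM). Here `Cs k` plays the role of `C_{k+1}`
in the paper (so `Cs 0 = C₁ = C`), and `x 0 = x¹`. -/
theorem strong_convergence_SEPNM
    {H₁ : Type*} [NormedAddCommGroup H₁] [InnerProductSpace ℝ H₁] [CompleteSpace H₁]
    {H₂ : Type*} [NormedAddCommGroup H₂] [InnerProductSpace ℝ H₂] [CompleteSpace H₂]
    (C : Set H₁) (hCne : C.Nonempty) (hCcl : IsClosed C) (hCcv : Convex ℝ C)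
    (Q : Set H₂) (hQne : Q.Nonempty) (hQcl : IsClosed Q) (hQcv : Convex ℝ Q)
    (S : H₁ → H₁) (hS : Set.MapsTo S C C)
    (hSne : ∀ x ∈ C, ∀ y ∈ C, ‖S x - S y‖ ≤ ‖x - y‖)
    (T : H₂ → H₂) (hT : Set.MapsTo T Q Q)
    (hTne : ∀ x ∈ Q, ∀ y ∈ Q, ‖T x - T y‖ ≤ ‖x - y‖)
    (A : H₁ →L[ℝ] H₂)
    (g : H₂ → H₂ → ℝ)
    (hgA1 : ∀ u ∈ Q, g u u = 0)
    (hgA2 : ∀ u ∈ Q, ∀ v ∈ Q, g u v + g v u ≤ 0)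
    (hgA3 : ∀ u ∈ Q, ∀ v ∈ Q, ∀ w ∈ Q,
      limsup (fun lam : ℝ => g (lam • w + (1 - lam) • u) v) (nhdsWithin 0 (Set.Ioi 0)) ≤ g u v)
    (hgA4 : ∀ u ∈ Q, ConvexOn ℝ Q (g u) ∧ LowerSemicontinuousOn (g u) Q)
    (f : H₁ → H₁ → ℝ) (c₁ c₂ : ℝ) (hc₁ : 0 < c₁) (hc₂ : 0 < c₂)
    (hfB1 : ∀ x ∈ C, f x x = 0)
    (hfB2 : ∀ x ∈ C, ∀ y ∈ C, 0 ≤ f x y → f y x ≤ 0)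
    (hfB3 : ∀ (xs ys : ℕ → H₁) (x y : H₁), (∀ k, xs k ∈ C) → (∀ k, ys k ∈ C) →
      x ∈ C → y ∈ C →
      (∀ w : H₁, Tendsto (fun k => (inner ℝ (xs k) w : ℝ)) atTop (nhds (inner ℝ x w))) →
      (∀ w : H₁, Tendsto (fun k => (inner ℝ (ys k) w : ℝ)) atTop (nhds (inner ℝ y w))) →
      Tendsto (fun k => f (xs k) (ys k)) atTop (nhds (f x y)))
    (hfB4 : ∀ x ∈ C, ConvexOn ℝ C (f x))
    (hfB5 : ∀ x ∈ C, ∀ y ∈ C, ∀ z ∈ C,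
      f x y + f y z ≥ f x z - c₁ * ‖x - y‖ ^ 2 - c₂ * ‖y - z‖ ^ 2)
    (a b : ℝ) (ha : 0 < a) (hab : a ≤ b) (hb : b < min (1 / (2 * c₁)) (1 / (2 * c₂)))
    (lam : ℕ → ℝ) (hlam : ∀ k, lam k ∈ Set.Icc a b)
    (α : ℝ) (hα0 : 0 < α) (hα1 : α < 1)
    (μ : ℝ) (hμ0 : 0 < μ) (hμ : μ * ‖A‖ ^ 2 < 1)
    (αk : ℕ → ℝ) (hαk : ∀ k, 0 < αk k)
    (hαkinf : ∃ c > 0, ∀ᶠ k in atTop, c ≤ αk k)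
    (x y z t : ℕ → H₁) (u : ℕ → H₂) (s : ℕ → H₁) (Cs : ℕ → Set H₁)
    (hCs0 : Cs 0 = C)
    (hx0 : x 0 ∈ C)
    (hy : ∀ k, y k ∈ C ∧ ∀ w ∈ C,
      lam k * f (x k) (y k) + (1 / 2) * ‖y k - x k‖ ^ 2 ≤
        lam k * f (x k) w + (1 / 2) * ‖w - x k‖ ^ 2)
    (hz : ∀ k, z k ∈ C ∧ ∀ w ∈ C,
      lam k * f (y k) (z k) + (1 / 2) * ‖z k - x k‖ ^ 2 ≤
        lam k * f (y k) w + (1 / 2) * ‖w - x k‖ ^ 2)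
    (ht : ∀ k, t k = (1 - α) • z k + α • S (z k))
    (hu : ∀ k, u k ∈ Q ∧ ∀ v ∈ Q,
      g (u k) v + (1 / αk k) * (inner ℝ (v - u k) (u k - A (t k)) : ℝ) ≥ 0)
    (hs : ∀ k, s k ∈ C ∧ ∀ w ∈ C,
      (inner ℝ ((t k + μ • (ContinuousLinearMap.adjoint A) (T (u k) - A (t k))) - s k)
        (w - s k) : ℝ) ≤ 0)
    (hCsrec : ∀ k, Cs (k + 1) =
      {r ∈ Cs k | ‖s k - r‖ ≤ ‖t k - r‖ ∧ ‖t k - r‖ ≤ ‖x k - r‖})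
    (hxk : ∀ k, x (k + 1) ∈ Cs (k + 1) ∧ ∀ w ∈ Cs (k + 1),
      (inner ℝ (x 0 - x (k + 1)) (w - x (k + 1)) : ℝ) ≤ 0)
    (Ω : Set H₁)
    (hΩ : Ω = {xs : H₁ | xs ∈ C ∧ (∀ w ∈ C, f xs w ≥ 0) ∧ S xs = xs ∧
      A xs ∈ Q ∧ (∀ v ∈ Q, g (A xs) v ≥ 0) ∧ T (A xs) = A xs})
    (hΩne : Ω.Nonempty) :
    (∀ k, (Cs k).Nonempty ∧ IsClosed (Cs k) ∧ Convex ℝ (Cs k) ∧ Ω ⊆ Cs k) ∧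
    ∃ p ∈ Ω,
      Tendsto x atTop (nhds p) ∧
      Tendsto z atTop (nhds p) ∧
      Tendsto u atTop (nhds (A p)) ∧
      A p ∈ Q ∧ (∀ v ∈ Q, g (A p) v ≥ 0) ∧ T (A p) = A p := by
  classical
  obtain ⟨p₀, hp₀Ω⟩ := hΩne
  -- basic memberships
  have hyC : ∀ k, y k ∈ C := fun k => (hy k).1
  have hzC : ∀ k, z k ∈ C := fun k => (hz k).1
  have huQ : ∀ k, u k ∈ Q := fun k => (hu k).1
  have hsC : ∀ k, s k ∈ C := fun k => (hs k).1
  have hSzC : ∀ k, S (z k) ∈ C := fun k => hS (hzC k)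
  have htC : ∀ k, t k ∈ C := by
    intro k; rw [ht k]
    exact hCcv (hzC k) (hSzC k) (by linarith) hα0.le (by ring)
  have hCsub : ∀ k, Cs k ⊆ C := by
    intro k; induction k with
    | zero => rw [hCs0]
    | succ n ih => rw [hCsrec n]; exact fun r hr => ih hr.1
  have hCsmono : ∀ {n m : ℕ}, n ≤ m → Cs m ⊆ Cs n := by
    have step : ∀ k, Cs (k + 1) ⊆ Cs k := by
      intro k; rw [hCsrec k]; exact fun r hr => hr.1
    intro n m h
    induction h with
    | refl => exact Set.Subset.rfl
    | step h ih => exact fun r hr => ih (step _ hr)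
  have hxmem : ∀ k, x k ∈ Cs k := by
    intro k; cases k with
    | zero => rw [hCs0]; exact hx0
    | succ n => exact (hxk n).1
  have hxC : ∀ k, x k ∈ C := fun k => hCsub k (hxmem k)
  -- properties of points of Ω
  have hΩmem : ∀ r ∈ Ω, r ∈ C ∧ (∀ w ∈ C, f r w ≥ 0) ∧ S r = r ∧
      A r ∈ Q ∧ (∀ v ∈ Q, g (A r) v ≥ 0) ∧ T (A r) = A r := by
    intro r hr; rw [hΩ] at hr; exact hr
  -- coefficient positivity
  have hbc₁ : 2 * b * c₁ < 1 := by
    have h1 : b < 1 / (2 * c₁) := lt_of_lt_of_le hb (min_le_left _ _)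
    have h2 : 0 < 2 * c₁ := by linarith
    rw [lt_div_iff₀ h2] at h1; linarith
  have hbc₂ : 2 * b * c₂ < 1 := by
    have h1 : b < 1 / (2 * c₂) := lt_of_lt_of_le hb (min_le_right _ _)
    have h2 : 0 < 2 * c₂ := by linarith
    rw [lt_div_iff₀ h2] at h1; linarith
  have hlampos : ∀ k, 0 < lam k := fun k => lt_of_lt_of_le ha (hlam k).1
  have hk₁ : ∀ k, 1 - 2 * b * c₁ ≤ 1 - 2 * lam k * c₁ := by
    intro k; have := (hlam k).2; nlinarith
  have hk₂ : ∀ k, 1 - 2 * b * c₂ ≤ 1 - 2 * lam k * c₂ := by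
    intro k; have := (hlam k).2; nlinarith
  -- quantitative estimate 1 (extragradient)
  have quant1 : ∀ r ∈ Ω, ∀ k, ‖z k - r‖ ^ 2 ≤ ‖x k - r‖ ^ 2
      - (1 - 2 * lam k * c₁) * ‖x k - y k‖ ^ 2 - (1 - 2 * lam k * c₂) * ‖y k - z k‖ ^ 2 := by
    intro r hr k
    obtain ⟨hrC, hrf, -, -, -, -⟩ := hΩmem r hr
    have vi1 : (inner ℝ (x k - y k) (z k - y k) : ℝ) ≤ lam k * (f (x k) (z k) - f (x k) (y k)) :=
      SEPNM.argmin_vi hCcv (hfB4 _ (hxC k)) (hlampos k) (x k) (y k) (hyC k) (hy k).2 (hzC k)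
    have vi2 : (inner ℝ (x k - z k) (r - z k) : ℝ) ≤ lam k * (f (y k) r - f (y k) (z k)) :=
      SEPNM.argmin_vi hCcv (hfB4 _ (hyC k)) (hlampos k) (x k) (z k) (hzC k) (hz k).2 hrC
    have hfyr : f (y k) r ≤ 0 := hfB2 r hrC (y k) (hyC k) (hrf (y k) (hyC k))
    have hlip := hfB5 (x k) (hxC k) (y k) (hyC k) (z k) (hzC k)
    have e1 : ‖x k - r‖ ^ 2 = ‖x k - z k‖ ^ 2
        - 2 * (inner ℝ (x k - z k) (r - z k) : ℝ) + ‖r - z k‖ ^ 2 := by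
      have h := norm_sub_sq_real (x k - z k) (r - z k)
      have h2 : (x k - z k) - (r - z k) = x k - r := by abel
      rw [h2] at h; exact h
    have e2 : ‖x k - z k‖ ^ 2 = ‖x k - y k‖ ^ 2
        - 2 * (inner ℝ (x k - y k) (z k - y k) : ℝ) + ‖z k - y k‖ ^ 2 := by
      have h := norm_sub_sq_real (x k - y k) (z k - y k)
      have h2 : (x k - y k) - (z k - y k) = x k - z k := by abel
      rw [h2] at h; exact h
    have e3 : ‖r - z k‖ = ‖z k - r‖ := norm_sub_rev _ _
    have e4 : ‖z k - y k‖ = ‖y k - z k‖ := norm_sub_rev _ _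
    have m1 : lam k * (f (y k) r) ≤ 0 :=
      mul_nonpos_of_nonneg_of_nonpos (hlampos k).le hfyr
    have m2 : lam k * (f (x k) (z k) - c₁ * ‖x k - y k‖ ^ 2 - c₂ * ‖y k - z k‖ ^ 2
        - f (x k) (y k)) ≤ lam k * (f (y k) (z k)) := by
      apply mul_le_mul_of_nonneg_left _ (hlampos k).le; linarith
    have hm : lam k * (f (x k) (z k) - c₁ * ‖x k - y k‖ ^ 2 - c₂ * ‖y k - z k‖ ^ 2
        - f (x k) (y k)) = lam k * f (x k) (z k) - lam k * c₁ * ‖x k - y k‖ ^ 2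
        - lam k * c₂ * ‖y k - z k‖ ^ 2 - lam k * f (x k) (y k) := by ring
    have hv1 : lam k * (f (x k) (z k) - f (x k) (y k))
        = lam k * f (x k) (z k) - lam k * f (x k) (y k) := by ring
    have hv2 : lam k * (f (y k) r - f (y k) (z k))
        = lam k * f (y k) r - lam k * f (y k) (z k) := by ring
    rw [hv1] at vi1; rw [hv2] at vi2; rw [hm] at m2
    have e5 : ‖r - z k‖ ^ 2 = ‖z k - r‖ ^ 2 := by rw [norm_sub_rev]
    have e6 : ‖z k - y k‖ ^ 2 = ‖y k - z k‖ ^ 2 := by rw [norm_sub_rev]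
    rw [e5] at e1; rw [e6] at e2
    have goal2 : (1 - 2 * lam k * c₁) * ‖x k - y k‖ ^ 2
        = ‖x k - y k‖ ^ 2 - 2 * (lam k * c₁ * ‖x k - y k‖ ^ 2) := by ring
    have goal3 : (1 - 2 * lam k * c₂) * ‖y k - z k‖ ^ 2
        = ‖y k - z k‖ ^ 2 - 2 * (lam k * c₂ * ‖y k - z k‖ ^ 2) := by ring
    rw [goal2, goal3]
    linarith [vi1, vi2, m1, m2, e1, e2]
  have hzxr : ∀ r ∈ Ω, ∀ k, ‖z k - r‖ ≤ ‖x k - r‖ := by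
    intro r hr k
    apply SEPNM.le_of_sq_le_sq (norm_nonneg _) (norm_nonneg _)
    have h := quant1 r hr k
    have h1 : 0 ≤ (1 - 2 * lam k * c₁) * ‖x k - y k‖ ^ 2 := by
      apply mul_nonneg _ (sq_nonneg _); linarith [hk₁ k]
    have h2 : 0 ≤ (1 - 2 * lam k * c₂) * ‖y k - z k‖ ^ 2 := by
      apply mul_nonneg _ (sq_nonneg _); linarith [hk₂ k]
    linarith
  -- quantitative estimate 2 (convex combination with S)
  have quant2 : ∀ r ∈ Ω, ∀ k, ‖t k - r‖ ≤ ‖z k - r‖ := by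
    intro r hr k
    obtain ⟨hrC, -, hrS, -, -, -⟩ := hΩmem r hr
    have e : t k - r = (1 - α) • (z k - r) + α • (S (z k) - r) := by
      rw [ht k]; module
    calc ‖t k - r‖ = ‖(1 - α) • (z k - r) + α • (S (z k) - r)‖ := by rw [e]
      _ ≤ ‖(1 - α) • (z k - r)‖ + ‖α • (S (z k) - r)‖ := norm_add_le _ _
      _ = (1 - α) * ‖z k - r‖ + α * ‖S (z k) - r‖ := by
          rw [norm_smul, norm_smul, Real.norm_eq_abs, Real.norm_eq_abs,
            abs_of_pos (by linarith : (0:ℝ) < 1 - α), abs_of_pos hα0]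
      _ ≤ (1 - α) * ‖z k - r‖ + α * ‖z k - r‖ := by
          have : ‖S (z k) - r‖ ≤ ‖z k - r‖ := by
            have := hSne (z k) (hzC k) r hrC; rw [hrS] at this; exact this
          nlinarith
      _ = ‖z k - r‖ := by ring
  -- firm-type inequality for u
  have hfixr : ∀ r ∈ Ω, ∀ k, (inner ℝ (u k - A r) (u k - A (t k)) : ℝ) ≤ 0 := by
    intro r hr k
    obtain ⟨-, -, -, hrAQ, hrg, -⟩ := hΩmem r hr
    have h1 := (hu k).2 (A r) hrAQ
    have h2 : g (u k) (A r) ≤ 0 := by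
      have := hgA2 (u k) (huQ k) (A r) hrAQ
      have := hrg (u k) (huQ k)
      linarith
    have hαpos := hαk k
    have h3 : 0 ≤ (inner ℝ (A r - u k) (u k - A (t k)) : ℝ) := by
      by_contra hneg
      push_neg at hneg
      have : (1 / αk k) * (inner ℝ (A r - u k) (u k - A (t k)) : ℝ) < 0 :=
        mul_neg_of_pos_of_neg (by positivity) hneg
      linarith
    have e : u k - A r = -(A r - u k) := by abel
    rw [e, inner_neg_left]; linarith
  have huAr : ∀ r ∈ Ω, ∀ k, ‖u k - A r‖ ≤ ‖A (t k) - A r‖ := by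
    intro r hr k
    apply SEPNM.le_of_sq_le_mul (norm_nonneg _) (norm_nonneg _)
    have h := hfixr r hr k
    have e : u k - A (t k) = (u k - A r) - (A (t k) - A r) := by abel
    rw [e, inner_sub_right] at h
    have hcs : (inner ℝ (u k - A r) (A (t k) - A r) : ℝ) ≤ ‖u k - A r‖ * ‖A (t k) - A r‖ :=
      real_inner_le_norm _ _
    rw [real_inner_self_eq_norm_sq] at h
    linarith
  -- quantitative estimate 3 (split step)
  have quant3 : ∀ r ∈ Ω, ∀ k,
      ‖s k - r‖ ^ 2 + μ * (1 - μ * ‖A‖ ^ 2) * ‖T (u k) - A (t k)‖ ^ 2 ≤ ‖t k - r‖ ^ 2 := by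
    intro r hr k
    obtain ⟨hrC, -, -, hrAQ, -, hrT⟩ := hΩmem r hr
    set δ := T (u k) - A (t k) with hδdef
    set v := t k + μ • (ContinuousLinearMap.adjoint A) δ with hvdef
    have hproj := (hs k).2 r hrC
    have hsv : ‖s k - r‖ ^ 2 ≤ ‖v - r‖ ^ 2 := by
      have h1 := norm_add_sq_real (v - s k) (s k - r)
      have e : (v - s k) + (s k - r) = v - r := by abel
      rw [e] at h1
      have h2 : (inner ℝ (v - s k) (s k - r) : ℝ) = -(inner ℝ (v - s k) (r - s k) : ℝ) := by
        rw [← inner_neg_right]; congr 1; abel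
      rw [h2] at h1
      nlinarith [sq_nonneg ‖v - s k‖, hproj]
    have hTur : ‖T (u k) - A r‖ ≤ ‖A (t k) - A r‖ := by
      calc ‖T (u k) - A r‖ = ‖T (u k) - T (A r)‖ := by rw [hrT]
        _ ≤ ‖u k - A r‖ := hTne (u k) (huQ k) (A r) hrAQ
        _ ≤ ‖A (t k) - A r‖ := huAr r hr k
    have hinner : 2 * (inner ℝ δ (A (t k) - A r) : ℝ) ≤ -‖δ‖ ^ 2 := by
      have h1 := norm_sub_sq_real (T (u k) - A r) δ
      have e : (T (u k) - A r) - δ = A (t k) - A r := by rw [hδdef]; abel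
      rw [e] at h1
      have h2 : (inner ℝ δ (A (t k) - A r) : ℝ)
          = (inner ℝ δ (T (u k) - A r) : ℝ) - (inner ℝ δ δ : ℝ) := by
        rw [← inner_sub_right]; congr 1; rw [hδdef]; abel
      have h3 : (inner ℝ δ (T (u k) - A r) : ℝ) = (inner ℝ (T (u k) - A r) δ : ℝ) :=
        real_inner_comm _ _
      have h4 : (inner ℝ δ δ : ℝ) = ‖δ‖ ^ 2 := real_inner_self_eq_norm_sq δ
      have h5 : ‖T (u k) - A r‖ ^ 2 ≤ ‖A (t k) - A r‖ ^ 2 :=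
        pow_le_pow_left₀ (norm_nonneg _) hTur 2
      rw [h2, h3, h4]; linarith
    have hAd : ‖(ContinuousLinearMap.adjoint A) δ‖ ≤ ‖A‖ * ‖δ‖ := by
      calc ‖(ContinuousLinearMap.adjoint A) δ‖ ≤ ‖ContinuousLinearMap.adjoint A‖ * ‖δ‖ :=
            (ContinuousLinearMap.adjoint A).le_opNorm δ
        _ = ‖A‖ * ‖δ‖ := by rw [LinearIsometryEquiv.norm_map ContinuousLinearMap.adjoint A]
    have hAd2 : ‖(ContinuousLinearMap.adjoint A) δ‖ ^ 2 ≤ ‖A‖ ^ 2 * ‖δ‖ ^ 2 := by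
      have := pow_le_pow_left₀ (norm_nonneg _) hAd 2
      calc ‖(ContinuousLinearMap.adjoint A) δ‖ ^ 2 ≤ (‖A‖ * ‖δ‖) ^ 2 := this
        _ = ‖A‖ ^ 2 * ‖δ‖ ^ 2 := by ring
    have hvr : ‖v - r‖ ^ 2 = ‖t k - r‖ ^ 2
        + 2 * (μ * (inner ℝ δ (A (t k) - A r) : ℝ)) + μ ^ 2 * ‖(ContinuousLinearMap.adjoint A) δ‖ ^ 2 := by
      have h1 := norm_add_sq_real (t k - r) (μ • (ContinuousLinearMap.adjoint A) δ)
      have e : (t k - r) + μ • (ContinuousLinearMap.adjoint A) δ = v - r := by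
        rw [hvdef]; abel
      rw [e] at h1
      rw [real_inner_smul_right, norm_smul, Real.norm_eq_abs, abs_of_pos hμ0] at h1
      have hadj : (inner ℝ (t k - r) ((ContinuousLinearMap.adjoint A) δ) : ℝ)
          = (inner ℝ δ (A (t k) - A r) : ℝ) := by
        rw [real_inner_comm, ContinuousLinearMap.adjoint_inner_left, map_sub]
      rw [hadj] at h1; rw [h1]; ring
    have hfinal : μ * (2 * (inner ℝ δ (A (t k) - A r) : ℝ)) ≤ μ * (-‖δ‖ ^ 2) :=
      mul_le_mul_of_nonneg_left hinner hμ0.le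
    have hμ2 : μ ^ 2 * ‖(ContinuousLinearMap.adjoint A) δ‖ ^ 2 ≤ μ ^ 2 * (‖A‖ ^ 2 * ‖δ‖ ^ 2) :=
      mul_le_mul_of_nonneg_left hAd2 (sq_nonneg μ)
    have expand : μ * (1 - μ * ‖A‖ ^ 2) * ‖δ‖ ^ 2
        = μ * ‖δ‖ ^ 2 - μ ^ 2 * (‖A‖ ^ 2 * ‖δ‖ ^ 2) := by ring
    have hfinal2 : μ * (2 * (inner ℝ δ (A (t k) - A r) : ℝ)) = 2 * (μ * (inner ℝ δ (A (t k) - A r) : ℝ)) := by ring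
    have hfin3 : μ * (-‖δ‖ ^ 2) = -(μ * ‖δ‖ ^ 2) := by ring
    linarith [hsv, hvr, hfinal, hμ2, expand, hfinal2, hfin3]
  -- the key inclusion inequalities
  have hμA : 0 < 1 - μ * ‖A‖ ^ 2 := by linarith
  have key : ∀ r ∈ Ω, ∀ k, ‖s k - r‖ ≤ ‖t k - r‖ ∧ ‖t k - r‖ ≤ ‖x k - r‖ := by
    intro r hr k
    constructor
    · apply SEPNM.le_of_sq_le_sq (norm_nonneg _) (norm_nonneg _)
      have h := quant3 r hr k
      have : 0 ≤ μ * (1 - μ * ‖A‖ ^ 2) * ‖T (u k) - A (t k)‖ ^ 2 := by positivity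
      linarith
    · exact le_trans (quant2 r hr k) (hzxr r hr k)
  -- Part 1
  have hΩsub : ∀ k, Ω ⊆ Cs k := by
    intro k; induction k with
    | zero => rw [hCs0]; exact fun r hr => (hΩmem r hr).1
    | succ n ih =>
      rw [hCsrec n]
      exact fun r hr => ⟨ih hr, (key r hr n).1, (key r hr n).2⟩
  have part1 : ∀ k, (Cs k).Nonempty ∧ IsClosed (Cs k) ∧ Convex ℝ (Cs k) ∧ Ω ⊆ Cs k := by
    intro k
    refine ⟨⟨p₀, hΩsub k hp₀Ω⟩, ?_, ?_, hΩsub k⟩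
    · induction k with
      | zero => rw [hCs0]; exact hCcl
      | succ n ih =>
        rw [hCsrec n]
        have e : {r ∈ Cs n | ‖s n - r‖ ≤ ‖t n - r‖ ∧ ‖t n - r‖ ≤ ‖x n - r‖}
            = Cs n ∩ ({r | ‖s n - r‖ ≤ ‖t n - r‖} ∩ {r | ‖t n - r‖ ≤ ‖x n - r‖}) := by
          ext r; simp [Set.mem_sep_iff, and_assoc]; tauto
        rw [e]
        exact ih.inter ((SEPNM.halfspace_closed _ _).inter (SEPNM.halfspace_closed _ _))
    · induction k with
      | zero => rw [hCs0]; exact hCcv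
      | succ n ih =>
        rw [hCsrec n]
        have e : {r ∈ Cs n | ‖s n - r‖ ≤ ‖t n - r‖ ∧ ‖t n - r‖ ≤ ‖x n - r‖}
            = Cs n ∩ ({r | ‖s n - r‖ ≤ ‖t n - r‖} ∩ {r | ‖t n - r‖ ≤ ‖x n - r‖}) := by
          ext r; simp [Set.mem_sep_iff, and_assoc]; tauto
        rw [e]
        exact ih.inter ((SEPNM.halfspace_convex _ _).inter (SEPNM.halfspace_convex _ _))
  -- Part 2 : projection inequality
  have hproj2 : ∀ k, ∀ w ∈ Cs (k + 1),
      ‖x (k + 1) - x 0‖ ^ 2 + ‖w - x (k + 1)‖ ^ 2 ≤ ‖w - x 0‖ ^ 2 := by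
    intro k w hw
    have h := (hxk k).2 w hw
    have h1 := norm_sub_sq_real (w - x (k + 1)) (x 0 - x (k + 1))
    have e : (w - x (k + 1)) - (x 0 - x (k + 1)) = w - x 0 := by abel
    rw [e] at h1
    have h2 : (inner ℝ (w - x (k + 1)) (x 0 - x (k + 1)) : ℝ)
        = (inner ℝ (x 0 - x (k + 1)) (w - x (k + 1)) : ℝ) := real_inner_comm _ _
    have h3 : ‖x 0 - x (k + 1)‖ = ‖x (k + 1) - x 0‖ := norm_sub_rev _ _
    rw [h2, h3] at h1
    nlinarith [h1, h]
  -- monotone and bounded distances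
  have emono : Monotone fun k => ‖x (k + 1) - x 0‖ := by
    apply monotone_nat_of_le_succ
    intro k
    have h := hproj2 k (x (k + 2)) (hCsmono (by omega) (hxmem (k + 2)))
    apply SEPNM.le_of_sq_le_sq (norm_nonneg _) (norm_nonneg _)
    nlinarith [sq_nonneg ‖x (k + 2) - x (k + 1)‖]
  have ebdd : ∀ k, ‖x (k + 1) - x 0‖ ≤ ‖p₀ - x 0‖ := by
    intro k
    have h := hproj2 k p₀ (hΩsub (k + 1) hp₀Ω)
    apply SEPNM.le_of_sq_le_sq (norm_nonneg _) (norm_nonneg _)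
    nlinarith [sq_nonneg ‖p₀ - x (k + 1)‖]
  obtain ⟨L, hL⟩ : ∃ L, Tendsto (fun k => ‖x (k + 1) - x 0‖) atTop (nhds L) :=
    ⟨_, tendsto_atTop_ciSup emono ⟨‖p₀ - x 0‖, by rintro r ⟨k, rfl⟩; exact ebdd k⟩⟩
  have hL2 : Tendsto (fun k => ‖x (k + 1) - x 0‖ ^ 2) atTop (nhds (L ^ 2)) := hL.pow 2
  have hcauchy : CauchySeq fun k => x (k + 1) := by
    rw [Metric.cauchySeq_iff']
    intro ε hε
    obtain ⟨N, hN⟩ := Metric.cauchySeq_iff'.1 hL2.cauchySeq (ε ^ 2) (by positivity)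
    refine ⟨N, fun n hn => ?_⟩
    have h1 := hproj2 N (x (n + 1)) (hCsmono (by omega) (hxmem (n + 1)))
    have h2 := hN n hn
    rw [Real.dist_eq] at h2
    have h3 : ‖x (n + 1) - x (N + 1)‖ ^ 2 < ε ^ 2 := by
      have := abs_lt.1 h2
      linarith [this.2]
    rw [dist_eq_norm]
    nlinarith [norm_nonneg (x (n + 1) - x (N + 1))]
  obtain ⟨p, hp⟩ := cauchySeq_tendsto_of_complete hcauchy
  have hxp : Tendsto x atTop (nhds p) := (tendsto_add_atTop_iff_nat 1).1 hp
  have hpCs : ∀ n, p ∈ Cs n := by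
    intro n
    apply (part1 n).2.1.mem_of_tendsto hp
    filter_upwards [eventually_ge_atTop n] with m hm
    exact hCsmono (by omega) (hxmem (m + 1))
  have hpC : p ∈ C := hCsub 0 (hpCs 0)
  have hstx : ∀ k, ‖s k - p‖ ≤ ‖t k - p‖ ∧ ‖t k - p‖ ≤ ‖x k - p‖ := by
    intro k
    have h := hpCs (k + 1)
    rw [hCsrec k] at h
    exact h.2
  have hxp0 : Tendsto (fun k => ‖x k - p‖) atTop (nhds 0) := by
    have := tendsto_iff_norm_sub_tendsto_zero.1 hxp
    exact this
  have htp0 : Tendsto (fun k => ‖t k - p‖) atTop (nhds 0) :=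
    squeeze_zero (fun k => norm_nonneg _) (fun k => (hstx k).2) hxp0
  have hsp0 : Tendsto (fun k => ‖s k - p‖) atTop (nhds 0) :=
    squeeze_zero (fun k => norm_nonneg _) (fun k => le_trans (hstx k).1 (hstx k).2) hxp0
  have htp : Tendsto t atTop (nhds p) := tendsto_iff_norm_sub_tendsto_zero.2 htp0
  have hsp : Tendsto s atTop (nhds p) := tendsto_iff_norm_sub_tendsto_zero.2 hsp0
  -- norm limits towards p₀
  have hnxp₀ : Tendsto (fun k => ‖x k - p₀‖) atTop (nhds ‖p - p₀‖) :=
    (hxp.sub tendsto_const_nhds).norm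
  have hntp₀ : Tendsto (fun k => ‖t k - p₀‖) atTop (nhds ‖p - p₀‖) :=
    (htp.sub tendsto_const_nhds).norm
  have hnsp₀ : Tendsto (fun k => ‖s k - p₀‖) atTop (nhds ‖p - p₀‖) :=
    (hsp.sub tendsto_const_nhds).norm
  have hnzp₀ : Tendsto (fun k => ‖z k - p₀‖) atTop (nhds ‖p - p₀‖) := by
    apply tendsto_of_tendsto_of_tendsto_of_le_of_le hntp₀ hnxp₀
    · exact fun k => quant2 p₀ hp₀Ω k
    · exact fun k => hzxr p₀ hp₀Ω k
  have heps : Tendsto (fun k => ‖x k - p₀‖ ^ 2 - ‖z k - p₀‖ ^ 2) atTop (nhds 0) := by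
    have := (hnxp₀.pow 2).sub (hnzp₀.pow 2)
    rwa [sub_self] at this
  -- x - y and y - z tend to zero
  have hκ₁ : (0:ℝ) < 1 - 2 * b * c₁ := by linarith
  have hκ₂ : (0:ℝ) < 1 - 2 * b * c₂ := by linarith
  have hxy2 : Tendsto (fun k => ‖x k - y k‖ ^ 2) atTop (nhds 0) := by
    have hb1 : ∀ k, ‖x k - y k‖ ^ 2 ≤ (‖x k - p₀‖ ^ 2 - ‖z k - p₀‖ ^ 2) / (1 - 2 * b * c₁) := by
      intro k
      rw [le_div_iff₀ hκ₁]
      have h := quant1 p₀ hp₀Ω k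
      have h1 : (1 - 2 * b * c₁) * ‖x k - y k‖ ^ 2 ≤ (1 - 2 * lam k * c₁) * ‖x k - y k‖ ^ 2 :=
        mul_le_mul_of_nonneg_right (hk₁ k) (sq_nonneg _)
      have h2 : 0 ≤ (1 - 2 * lam k * c₂) * ‖y k - z k‖ ^ 2 :=
        mul_nonneg (by linarith [hk₂ k]) (sq_nonneg _)
      have h3 : 0 ≤ ‖z k - p₀‖ ^ 2 := sq_nonneg _
      nlinarith
    apply squeeze_zero (fun k => sq_nonneg _) hb1
    have := heps.div_const (1 - 2 * b * c₁)
    rwa [zero_div] at this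
  have hyz2 : Tendsto (fun k => ‖y k - z k‖ ^ 2) atTop (nhds 0) := by
    have hb1 : ∀ k, ‖y k - z k‖ ^ 2 ≤ (‖x k - p₀‖ ^ 2 - ‖z k - p₀‖ ^ 2) / (1 - 2 * b * c₂) := by
      intro k
      rw [le_div_iff₀ hκ₂]
      have h := quant1 p₀ hp₀Ω k
      have h1 : (1 - 2 * b * c₂) * ‖y k - z k‖ ^ 2 ≤ (1 - 2 * lam k * c₂) * ‖y k - z k‖ ^ 2 :=
        mul_le_mul_of_nonneg_right (hk₂ k) (sq_nonneg _)
      have h2 : 0 ≤ (1 - 2 * lam k * c₁) * ‖x k - y k‖ ^ 2 :=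
        mul_nonneg (by linarith [hk₁ k]) (sq_nonneg _)
      have h3 : 0 ≤ ‖z k - p₀‖ ^ 2 := sq_nonneg _
      nlinarith
    apply squeeze_zero (fun k => sq_nonneg _) hb1
    have := heps.div_const (1 - 2 * b * c₂)
    rwa [zero_div] at this
  have sqrt_zero : ∀ F : ℕ → H₁, Tendsto (fun k => ‖F k‖ ^ 2) atTop (nhds 0) →
      Tendsto (fun k => ‖F k‖) atTop (nhds 0) := by
    intro F h
    have h2 := h.sqrt
    rw [Real.sqrt_zero] at h2
    convert h2 using 2 with k
    rw [Real.sqrt_sq (norm_nonneg _)]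
  have hxy : Tendsto (fun k => ‖x k - y k‖) atTop (nhds 0) := sqrt_zero _ hxy2
  have hyz : Tendsto (fun k => ‖y k - z k‖) atTop (nhds 0) := sqrt_zero _ hyz2
  have hyp : Tendsto y atTop (nhds p) := by
    rw [tendsto_iff_norm_sub_tendsto_zero]
    apply squeeze_zero (fun k => norm_nonneg _) (g := fun k => ‖x k - y k‖ + ‖x k - p‖)
    · intro k
      calc ‖y k - p‖ = ‖(y k - x k) + (x k - p)‖ := by rw [sub_add_sub_cancel]
        _ ≤ ‖y k - x k‖ + ‖x k - p‖ := norm_add_le _ _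
        _ = ‖x k - y k‖ + ‖x k - p‖ := by rw [norm_sub_rev]
    · have := hxy.add hxp0; rwa [add_zero] at this
  have hzp : Tendsto z atTop (nhds p) := by
    rw [tendsto_iff_norm_sub_tendsto_zero]
    apply squeeze_zero (fun k => norm_nonneg _) (g := fun k => ‖y k - z k‖ + ‖y k - p‖)
    · intro k
      calc ‖z k - p‖ = ‖(z k - y k) + (y k - p)‖ := by rw [sub_add_sub_cancel]
        _ ≤ ‖z k - y k‖ + ‖y k - p‖ := norm_add_le _ _
        _ = ‖y k - z k‖ + ‖y k - p‖ := by rw [norm_sub_rev]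
    · have := hyz.add (tendsto_iff_norm_sub_tendsto_zero.1 hyp)
      rwa [add_zero] at this
  -- S p = p
  have hSp : S p = p := by
    have h1 : Tendsto (fun k => S (z k)) atTop (nhds (S p)) := by
      rw [tendsto_iff_norm_sub_tendsto_zero]
      apply squeeze_zero (fun k => norm_nonneg _) (g := fun k => ‖z k - p‖)
      · exact fun k => hSne (z k) (hzC k) p hpC
      · exact tendsto_iff_norm_sub_tendsto_zero.1 hzp
    have h2 : Tendsto (fun k => S (z k)) atTop (nhds p) := by
      have e : (fun k => S (z k)) = fun k => α⁻¹ • (t k - (1 - α) • z k) := by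
        funext k
        rw [ht k]
        rw [add_sub_cancel_left, smul_smul, inv_mul_cancel₀ hα0.ne', one_smul]
      rw [e]
      have h3 : Tendsto (fun k => t k - (1 - α) • z k) atTop (nhds (p - (1 - α) • p)) :=
        htp.sub (hzp.const_smul _)
      have h4 := h3.const_smul α⁻¹
      have e2 : α⁻¹ • (p - (1 - α) • p) = p := by
        have e3 : p - (1 - α) • p = α • p := by module
        rw [e3, smul_smul, inv_mul_cancel₀ hα0.ne', one_smul]
      rwa [e2] at h4
    exact tendsto_nhds_unique h1 h2
  -- T u - A t tends to zero
  have heps2 : Tendsto (fun k => ‖t k - p₀‖ ^ 2 - ‖s k - p₀‖ ^ 2) atTop (nhds 0) := by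
    have := (hntp₀.pow 2).sub (hnsp₀.pow 2)
    rwa [sub_self] at this
  have hδ2 : Tendsto (fun k => ‖T (u k) - A (t k)‖ ^ 2) atTop (nhds 0) := by
    have hμμ : 0 < μ * (1 - μ * ‖A‖ ^ 2) := mul_pos hμ0 hμA
    have hb1 : ∀ k, ‖T (u k) - A (t k)‖ ^ 2
        ≤ (‖t k - p₀‖ ^ 2 - ‖s k - p₀‖ ^ 2) / (μ * (1 - μ * ‖A‖ ^ 2)) := by
      intro k
      rw [le_div_iff₀ hμμ]
      have h := quant3 p₀ hp₀Ω k
      nlinarith [sq_nonneg ‖s k - p₀‖]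
    apply squeeze_zero (fun k => sq_nonneg _) hb1
    have := heps2.div_const (μ * (1 - μ * ‖A‖ ^ 2))
    rwa [zero_div] at this
  have hδ : Tendsto (fun k => ‖T (u k) - A (t k)‖) atTop (nhds 0) := by
    have h2 := hδ2.sqrt
    rw [Real.sqrt_zero] at h2
    convert h2 using 2 with k
    rw [Real.sqrt_sq (norm_nonneg _)]
  have hAtp : Tendsto (fun k => A (t k)) atTop (nhds (A p)) :=
    (A.continuous.tendsto p).comp htp
  have hTup : Tendsto (fun k => T (u k)) atTop (nhds (A p)) := by
    have h1 : Tendsto (fun k => T (u k) - A (t k)) atTop (nhds 0) := by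
      rw [tendsto_zero_iff_norm_tendsto_zero]; exact hδ
    have := h1.add hAtp
    rw [zero_add] at this
    convert this using 2 with k
    abel
  -- u tends to A p
  have hApmem := hΩmem p₀ hp₀Ω
  have hAp₀Q : A p₀ ∈ Q := hApmem.2.2.2.1
  have hTAp₀ : T (A p₀) = A p₀ := hApmem.2.2.2.2.2
  have hnAtp₀ : Tendsto (fun k => ‖A (t k) - A p₀‖) atTop (nhds ‖A p - A p₀‖) :=
    (hAtp.sub tendsto_const_nhds).norm
  have hnTup₀ : Tendsto (fun k => ‖T (u k) - A p₀‖) atTop (nhds ‖A p - A p₀‖) :=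
    (hTup.sub tendsto_const_nhds).norm
  have hnup₀ : Tendsto (fun k => ‖u k - A p₀‖) atTop (nhds ‖A p - A p₀‖) := by
    apply tendsto_of_tendsto_of_tendsto_of_le_of_le hnTup₀ hnAtp₀
    · intro k
      calc ‖T (u k) - A p₀‖ = ‖T (u k) - T (A p₀)‖ := by rw [hTAp₀]
        _ ≤ ‖u k - A p₀‖ := hTne (u k) (huQ k) (A p₀) hAp₀Q
    · exact fun k => huAr p₀ hp₀Ω k
  have hAtu2 : Tendsto (fun k => ‖A (t k) - u k‖ ^ 2) atTop (nhds 0) := by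
    have hb1 : ∀ k, ‖A (t k) - u k‖ ^ 2 ≤ ‖A (t k) - A p₀‖ ^ 2 - ‖u k - A p₀‖ ^ 2 := by
      intro k
      have h := hfixr p₀ hp₀Ω k
      have e : u k - A (t k) = (u k - A p₀) - (A (t k) - A p₀) := by abel
      rw [e, inner_sub_right] at h
      rw [real_inner_self_eq_norm_sq] at h
      have h1 := norm_sub_sq_real (A (t k) - A p₀) (u k - A p₀)
      have e2 : (A (t k) - A p₀) - (u k - A p₀) = A (t k) - u k := by abel
      rw [e2] at h1
      have h2 : (inner ℝ (A (t k) - A p₀) (u k - A p₀) : ℝ)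
          = (inner ℝ (u k - A p₀) (A (t k) - A p₀) : ℝ) := real_inner_comm _ _
      rw [h2] at h1
      linarith
    apply squeeze_zero (fun k => sq_nonneg _) hb1
    have := (hnAtp₀.pow 2).sub (hnup₀.pow 2)
    rwa [sub_self] at this
  have hup : Tendsto u atTop (nhds (A p)) := by
    have hAtu : Tendsto (fun k => A (t k) - u k) atTop (nhds 0) := by
      rw [tendsto_zero_iff_norm_tendsto_zero]
      have h2 := hAtu2.sqrt
      rw [Real.sqrt_zero] at h2
      convert h2 using 2 with k
      rw [Real.sqrt_sq (norm_nonneg _)]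
    have h3 := hAtp.sub hAtu
    rw [sub_zero] at h3
    convert h3 using 2 with k
    abel
  have hApQ : A p ∈ Q := hQcl.mem_of_tendsto hup (Eventually.of_forall huQ)
  have hTAp : T (A p) = A p := by
    have h1 : Tendsto (fun k => T (u k)) atTop (nhds (T (A p))) := by
      rw [tendsto_iff_norm_sub_tendsto_zero]
      apply squeeze_zero (fun k => norm_nonneg _) (g := fun k => ‖u k - A p‖)
      · exact fun k => hTne (u k) (huQ k) (A p) hApQ
      · exact tendsto_iff_norm_sub_tendsto_zero.1 hup
    exact tendsto_nhds_unique h1 hTup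
  -- u k - A t k tends to 0 in norm
  have huAt : Tendsto (fun k => ‖u k - A (t k)‖) atTop (nhds 0) := by
    have h2 := hAtu2.sqrt
    rw [Real.sqrt_zero] at h2
    have h3 : (fun k => Real.sqrt (‖A (t k) - u k‖ ^ 2)) = fun k => ‖u k - A (t k)‖ := by
      funext k; rw [Real.sqrt_sq (norm_nonneg _), norm_sub_rev]
    rwa [h3] at h2
  -- g (v) (A p) ≤ 0 for all v in Q
  have hgv : ∀ v ∈ Q, g v (A p) ≤ 0 := by
    intro v hv
    have hb1 : ∀ k, g v (u k) ≤ (1 / αk k) * (‖v - u k‖ * ‖u k - A (t k)‖) := by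
      intro k
      have h1 := (hu k).2 v hv
      have h2 := hgA2 (u k) (huQ k) v hv
      have h3 : (inner ℝ (v - u k) (u k - A (t k)) : ℝ) ≤ ‖v - u k‖ * ‖u k - A (t k)‖ :=
        real_inner_le_norm _ _
      have h4 : (1 / αk k) * (inner ℝ (v - u k) (u k - A (t k)) : ℝ)
          ≤ (1 / αk k) * (‖v - u k‖ * ‖u k - A (t k)‖) := by
        apply mul_le_mul_of_nonneg_left h3
        have := hαk k; positivity
      linarith
    obtain ⟨c, hc, hev⟩ := hαkinf
    have hvu : Tendsto (fun k => ‖v - u k‖) atTop (nhds ‖v - A p‖) :=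
      (tendsto_const_nhds.sub hup).norm
    have hβ : Tendsto (fun k => (1 / c) * (‖v - u k‖ * ‖u k - A (t k)‖)) atTop (nhds 0) := by
      have := (hvu.mul huAt).const_mul (1 / c)
      rwa [mul_zero, mul_zero] at this
    have hβ0 : Tendsto (fun k => (1 / αk k) * (‖v - u k‖ * ‖u k - A (t k)‖)) atTop (nhds 0) := by
      apply squeeze_zero' (Eventually.of_forall fun k =>
        mul_nonneg (by have := (hαk k).le; positivity) (by positivity)) _ hβ
      filter_upwards [hev] with k hk
      apply mul_le_mul_of_nonneg_right _ (by positivity)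
      apply one_div_le_one_div_of_le hc hk
    by_contra hpos
    push_neg at hpos
    have hlsc := (hgA4 v hv).2 (A p) hApQ
    have hhalf : g v (A p) / 2 < g v (A p) := by linarith
    have hevlsc := hlsc (g v (A p) / 2) hhalf
    have huQtend : Tendsto u atTop (nhdsWithin (A p) Q) :=
      tendsto_nhdsWithin_iff.2 ⟨hup, Eventually.of_forall huQ⟩
    have hev1 : ∀ᶠ k in atTop, g v (A p) / 2 < g v (u k) := huQtend.eventually hevlsc
    have hev2 : ∀ᶠ k in atTop,
        (1 / αk k) * (‖v - u k‖ * ‖u k - A (t k)‖) < g v (A p) / 2 := by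
      apply hβ0.eventually_lt_const
      linarith
    obtain ⟨k, h1, h2⟩ := (hev1.and hev2).exists
    have := hb1 k
    linarith
  -- g (A p) v ≥ 0 for all v in Q
  have hgAp : ∀ v ∈ Q, g (A p) v ≥ 0 := by
    intro v hv
    have hkey : ∀ lm ∈ Set.Ioo (0:ℝ) 1, 0 ≤ g (lm • v + (1 - lm) • A p) v := by
      intro lm hlm
      have hwQ : lm • v + (1 - lm) • A p ∈ Q :=
        hQcv hv hApQ hlm.1.le (by linarith [hlm.2]) (by ring)
      have hconv : g (lm • v + (1 - lm) • A p) (lm • v + (1 - lm) • A p)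
          ≤ lm • g (lm • v + (1 - lm) • A p) v
            + (1 - lm) • g (lm • v + (1 - lm) • A p) (A p) :=
        (hgA4 _ hwQ).1.2 hv hApQ hlm.1.le (by linarith [hlm.2]) (by ring)
      have h0 : g (lm • v + (1 - lm) • A p) (lm • v + (1 - lm) • A p) = 0 := hgA1 _ hwQ
      have h1 : g (lm • v + (1 - lm) • A p) (A p) ≤ 0 := hgv _ hwQ
      have h2 : 0 ≤ lm * g (lm • v + (1 - lm) • A p) v := by
        have h3 : (1 - lm) * g (lm • v + (1 - lm) • A p) (A p) ≤ 0 :=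
          mul_nonpos_of_nonneg_of_nonpos (by linarith [hlm.2]) h1
        rw [h0] at hconv
        simp only [smul_eq_mul] at hconv
        linarith
      exact nonneg_of_mul_nonneg_right h2 hlm.1
    have h3 := hgA3 (A p) hApQ v hv v hv
    refine le_trans ?_ h3
    rw [Filter.limsup_eq]
    apply Real.sInf_nonneg
    intro aa haa
    simp only [Set.mem_setOf_eq] at haa
    have hev1 : ∀ᶠ lm in nhdsWithin (0:ℝ) (Set.Ioi 0), lm ∈ Set.Ioo (0:ℝ) 1 := by
      have h1 : ∀ᶠ lm in nhdsWithin (0:ℝ) (Set.Ioi 0), lm < 1 :=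
        eventually_nhdsWithin_of_eventually_nhds (eventually_lt_nhds one_pos)
      filter_upwards [self_mem_nhdsWithin, h1] with lm h2 h3
      exact ⟨h2, h3⟩
    have hev2 : ∀ᶠ lm in nhdsWithin (0:ℝ) (Set.Ioi 0),
        0 ≤ g (lm • v + (1 - lm) • A p) v := by
      filter_upwards [hev1] with lm hlm
      exact hkey lm hlm
    obtain ⟨lm, h1, h2⟩ := (hev2.and haa).exists
    linarith
  -- f p w ≥ 0 for all w in C
  have hfp : ∀ w ∈ C, f p w ≥ 0 := by
    intro w hw
    have hvi : ∀ k, (inner ℝ (x k - y k) (w - y k) : ℝ)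
        ≤ lam k * (f (x k) w - f (x k) (y k)) := fun k =>
      SEPNM.argmin_vi hCcv (hfB4 _ (hxC k)) (hlampos k) (x k) (y k) (hyC k) (hy k).2 hw
    have hlow : ∀ k, -(‖x k - y k‖ * ‖w - y k‖) / a ≤ f (x k) w - f (x k) (y k) := by
      intro k
      have h1 : -(‖x k - y k‖ * ‖w - y k‖) ≤ (inner ℝ (x k - y k) (w - y k) : ℝ) := by
        have := abs_real_inner_le_norm (x k - y k) (w - y k)
        have := abs_le.1 this
        linarith [this.1]
      have h2 : -(‖x k - y k‖ * ‖w - y k‖) ≤ lam k * (f (x k) w - f (x k) (y k)) :=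
        le_trans h1 (hvi k)
      rw [div_le_iff₀ ha]
      rcases le_or_gt 0 (f (x k) w - f (x k) (y k)) with hd | hd
      · have : 0 ≤ (f (x k) w - f (x k) (y k)) * a := mul_nonneg hd ha.le
        nlinarith [mul_nonneg (norm_nonneg (x k - y k)) (norm_nonneg (w - y k))]
      · have h4 : lam k * (f (x k) w - f (x k) (y k))
            ≤ a * (f (x k) w - f (x k) (y k)) := by
          apply mul_le_mul_of_nonpos_right (hlam k).1 hd.le
        nlinarith
    have hinner1 : ∀ w' : H₁, Tendsto (fun k => (inner ℝ (x k) w' : ℝ)) atTop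
        (nhds (inner ℝ p w')) := fun w' => hxp.inner tendsto_const_nhds
    have hinner2 : ∀ w' : H₁, Tendsto (fun k => (inner ℝ (y k) w' : ℝ)) atTop
        (nhds (inner ℝ p w')) := fun w' => hyp.inner tendsto_const_nhds
    have hf1 : Tendsto (fun k => f (x k) w) atTop (nhds (f p w)) :=
      hfB3 x (fun _ => w) p w hxC (fun _ => hw) hpC hw hinner1
        (fun w' => tendsto_const_nhds)
    have hf2 : Tendsto (fun k => f (x k) (y k)) atTop (nhds (f p p)) :=
      hfB3 x y p p hxC hyC hpC hpC hinner1 hinner2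
    rw [hfB1 p hpC] at hf2
    have hG : Tendsto (fun k => f (x k) w - f (x k) (y k)) atTop (nhds (f p w)) := by
      have := hf1.sub hf2
      rwa [sub_zero] at this
    have hwy : Tendsto (fun k => ‖w - y k‖) atTop (nhds ‖w - p‖) :=
      (tendsto_const_nhds.sub hyp).norm
    have hF : Tendsto (fun k => -(‖x k - y k‖ * ‖w - y k‖) / a) atTop (nhds 0) := by
      have h1 := (hxy.mul hwy).neg.div_const a
      rwa [zero_mul, neg_zero, zero_div] at h1
    exact le_of_tendsto_of_tendsto' hF hG hlow
  have hpΩ : p ∈ Ω := by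
    rw [hΩ]
    exact ⟨hpC, hfp, hSp, hApQ, hgAp, hTAp⟩
  exact ⟨part1, p, hpΩ, hxp, hzp, hup, hApQ, hgAp, hTAp⟩
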